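/- Let M be an n × n matrix over a field where row j is supported on the prefix {1,...,m_j}. Suppose the multiset {m_1,...,m_n} sorted ascending satisfies m_{(j)} ≥ j for every j (i.e., the j-th smallest support length is at least j). Then for generic choices of the nonzero entries, M is invertible; conversely if m_{(j)} < j for some j, then M is singular for every choice of entries. -/
import Mathlib

open Finset

/-- Hall-type condition for staircase matrices: rows supported
on prefixes of lengths `m j` admit an invertible matrix iff the sorted support
lengths dominate the identity, i.e. for every `c` at most `c` rows have
support length ≤ `c`. Genericity is formalized as existence of a choice of
entries within the supports; the converse direction is exact. -/
theorem stmt_15 {F : Type*} [Field F] {n : ℕ} (m : Fin n → ℕ)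
    (hm : ∀ j, 1 ≤ m j ∧ m j ≤ n) :
    ((∀ c : ℕ, (univ.filter fun j : Fin n => m j ≤ c).card ≤ c) →
      ∃ M : Matrix (Fin n) (Fin n) F,
        (∀ (j : Fin n) (i : Fin n), m j ≤ (i : ℕ) → M j i = 0) ∧ IsUnit M) ∧
    ((∃ c : ℕ, c < (univ.filter fun j : Fin n => m j ≤ c).card) →
      ∀ M : Matrix (Fin n) (Fin n) F,
        (∀ (j : Fin n) (i : Fin n), m j ≤ (i : ℕ) → M j i = 0) → ¬ IsUnit M) := by
  constructor
  · -- Hall direction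
    intro hcond
    set t : Fin n → Finset (Fin n) := fun j => univ.filter fun i : Fin n => (i : ℕ) < m j
      with ht
    have hcardt : ∀ j, (t j).card = m j := by
      intro j
      have hmn : m j ≤ n := (hm j).2
      have : t j = (univ : Finset (Fin (m j))).image (Fin.castLE hmn) := by
        ext i
        simp only [ht, mem_filter, mem_univ, true_and, mem_image]
        constructor
        · intro hi
          exact ⟨⟨i, hi⟩, rfl⟩
        · rintro ⟨k, -, rfl⟩
          exact k.isLt
      rw [this, Finset.card_image_of_injective _ (Fin.castLE_injective hmn)]
      simp
    have hall : ∀ s : Finset (Fin n), s.card ≤ (s.biUnion t).card := by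
      intro s
      rcases s.eq_empty_or_nonempty with rfl | hs
      · simp
      obtain ⟨j₀, hj₀, hj₀max⟩ := s.exists_max_image m hs
      have h1 : s.card ≤ m j₀ := by
        calc s.card ≤ (univ.filter fun j : Fin n => m j ≤ m j₀).card := by
              apply Finset.card_le_card
              intro j hj
              simp only [mem_filter, mem_univ, true_and]
              exact hj₀max j hj
          _ ≤ m j₀ := hcond _
      calc s.card ≤ m j₀ := h1
        _ = (t j₀).card := (hcardt j₀).symm
        _ ≤ (s.biUnion t).card := Finset.card_le_card (Finset.subset_biUnion_of_mem t hj₀)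
    obtain ⟨f, hfinj, hft⟩ :=
      (Finset.all_card_le_biUnion_card_iff_existsInjective' t).mp hall
    have hflt : ∀ j, ((f j : ℕ)) < m j := by
      intro j
      have := hft j
      simpa only [ht, mem_filter, mem_univ, true_and] using this
    let σ : Equiv.Perm (Fin n) := Equiv.ofBijective f (Finite.injective_iff_bijective.mp hfinj)
    refine ⟨σ.permMatrix F, ?_, ?_⟩
    · intro j i hij
      have : σ j ≠ i := by
        intro h
        have h2 : (f j : ℕ) = (i : ℕ) := by
          rw [← h]; rfl
        have h3 := hflt j
        omega
      simp [Equiv.Perm.permMatrix, PEquiv.toMatrix, Equiv.toPEquiv, Option.mem_def, this]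
    · rw [Matrix.isUnit_iff_isUnit_det, Matrix.det_permutation]
      rcases Int.units_eq_one_or σ.sign with h | h <;> simp [h]
  · -- converse direction
    rintro ⟨c, hc⟩ M hsupp hunit
    have hrows : LinearIndependent F (fun j => M j) :=
      Matrix.linearIndependent_rows_iff_isUnit.mpr hunit
    set S := {j : Fin n // m j ≤ c}
    set T := {i : Fin n // (i : ℕ) < c}
    have hv : LinearIndependent F (fun (j : S) (i : T) => M j.1 i.1) := by
      rw [Fintype.linearIndependent_iff]
      intro g hg
      set G : Fin n → F := fun j => if h : m j ≤ c then g ⟨j, h⟩ else 0 with hGdef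
      have hsum : ∑ j, G j • M j = 0 := by
        funext i
        rw [Finset.sum_apply]
        simp only [Pi.smul_apply, Pi.zero_apply, smul_eq_mul]
        by_cases hi : (i : ℕ) < c
        · have h0 := congr_fun hg ⟨i, hi⟩
          rw [Finset.sum_apply] at h0
          simp only [Pi.smul_apply, Pi.zero_apply, smul_eq_mul] at h0
          have e1 : ∑ j ∈ univ.filter (fun j : Fin n => m j ≤ c), G j * M j i
              = ∑ j : Fin n, G j * M j i := by
            apply Finset.sum_filter_of_ne
            intro j _ hne
            by_contra h
            simp [hGdef, h] at hne
          have e2 : ∑ j ∈ univ.filter (fun j : Fin n => m j ≤ c), G j * M j i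
              = ∑ x : S, G x.1 * M x.1 i :=
            Finset.sum_subtype _ (by simp) _
          rw [← e1, e2, ← h0]
          apply Finset.sum_congr rfl
          intro x _
          simp [hGdef, x.2]
        · apply Finset.sum_eq_zero
          intro j _
          by_cases h : m j ≤ c
          · simp [hsupp j i (by omega)]
          · simp [hGdef, h]
      have hG := Fintype.linearIndependent_iff.mp hrows G hsum
      intro j
      have := hG j.1
      simpa only [hGdef, j.2, dif_pos] using this
    have hST : Fintype.card S ≤ Fintype.card T := by
      have := hv.fintype_card_le_finrank
      rwa [Module.finrank_pi] at this
    have hT : Fintype.card T ≤ c := by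
      have := Fintype.card_le_of_injective (fun i : T => (⟨(i : Fin n), i.2⟩ : Fin c))
        (by rintro ⟨⟨a, ha⟩, ha'⟩ ⟨⟨b, hb⟩, hb'⟩ h
            have := congr_arg Fin.val h
            simp_all)
      simpa using this
    have hS : Fintype.card S = (univ.filter fun j : Fin n => m j ≤ c).card := by
      rw [Fintype.card_subtype]
    omega
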